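/- If k + b² = 0, then the function J4 = L1(p2 − p3) + L2(p3 − p1) + L3(p1 − p2) is a constant of motion for H: {H, J4} = 0, where Li are the angular momentum components. -/

import Mathlib

open scoped BigOperators

/-- Partial derivative of a function on phase space ℝ⁶ in the i-th coordinate. -/
noncomputable def pd (i : Fin 6) (f : (Fin 6 → ℝ) → ℝ) (x : Fin 6 → ℝ) : ℝ :=
  fderiv ℝ f x (Pi.single i 1)

/-- Canonical Poisson bracket on ℝ⁶ with coordinates (q1,q2,q3,p1,p2,p3). -/
noncomputable def pb (F G : (Fin 6 → ℝ) → ℝ) (x : Fin 6 → ℝ) : ℝ :=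
  (pd 0 F x * pd 3 G x - pd 3 F x * pd 0 G x) +
  (pd 1 F x * pd 4 G x - pd 4 F x * pd 1 G x) +
  (pd 2 F x * pd 5 G x - pd 5 F x * pd 2 G x)

/-- Angular momentum components: L1 = q2 p3 − q3 p2, etc. -/
def L1 (x : Fin 6 → ℝ) : ℝ := x 1 * x 5 - x 2 * x 4
def L2 (x : Fin 6 → ℝ) : ℝ := x 2 * x 3 - x 0 * x 5
def L3 (x : Fin 6 → ℝ) : ℝ := x 0 * x 4 - x 1 * x 3

/-- The Hamiltonian of the coupled oscillators with magnetic terms. -/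
noncomputable def Ham (b k : ℝ) (x : Fin 6 → ℝ) : ℝ :=
  (1/2) * (x 3 ^ 2 + x 4 ^ 2 + x 5 ^ 2) + b * (L1 x + L2 x + L3 x) +
  (1/2) * (b ^ 2 + k) * ((x 1 - x 0) ^ 2 + (x 2 - x 1) ^ 2 + (x 0 - x 2) ^ 2)

/-- J2 = p1 + p2 + p3. -/
def J2 (x : Fin 6 → ℝ) : ℝ := x 3 + x 4 + x 5

/-- J3 = L1 + L2 + L3. -/
def J3 (x : Fin 6 → ℝ) : ℝ := L1 x + L2 x + L3 x

/-- J4 = L1(p2−p3) + L2(p3−p1) + L3(p1−p2). -/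
def J4w (x : Fin 6 → ℝ) : ℝ :=
  L1 x * (x 4 - x 5) + L2 x * (x 5 - x 3) + L3 x * (x 3 - x 4)

noncomputable def Pj (j : Fin 6) : (Fin 6 → ℝ) →L[ℝ] ℝ := ContinuousLinearMap.proj j

lemma hc (j : Fin 6) (x : Fin 6 → ℝ) : HasFDerivAt (fun y : Fin 6 → ℝ => y j) (Pj j) x :=
  (Pj j).hasFDerivAt

lemma Pj_single (j i : Fin 6) : Pj j (Pi.single i 1) = if i = j then 1 else 0 := by
  simp [Pj, Pi.single_apply, eq_comm]

set_option maxHeartbeats 2000000 in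
/-- If k + b² = 0 then J4 is a constant of motion: {H, J4} = 0. -/
theorem stmt15 (b k : ℝ) (hk : k = -b^2) (x : Fin 6 → ℝ) :
    pb (Ham b k) J4w x = 0 := by
  subst hk
  have hH : Ham b (-b^2) = fun y : Fin 6 → ℝ =>
      (1/2) * (y 3 * y 3 + y 4 * y 4 + y 5 * y 5) +
      b * ((y 1 * y 5 - y 2 * y 4) + (y 2 * y 3 - y 0 * y 5) + (y 0 * y 4 - y 1 * y 3)) := by
    funext y; simp only [Ham, L1, L2, L3]; ring
  have hJ : J4w = fun y : Fin 6 → ℝ =>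
      (y 1 * y 5 - y 2 * y 4) * (y 4 - y 5) + (y 2 * y 3 - y 0 * y 5) * (y 5 - y 3) +
      (y 0 * y 4 - y 1 * y 3) * (y 3 - y 4) := by
    funext y; simp [J4w, L1, L2, L3]
  have hHd := (((((hc 3 x).mul (hc 3 x)).add ((hc 4 x).mul (hc 4 x))).add ((hc 5 x).mul (hc 5 x))).const_mul (1/2)).add
      ((((((hc 1 x).mul (hc 5 x)).sub ((hc 2 x).mul (hc 4 x))).add
        (((hc 2 x).mul (hc 3 x)).sub ((hc 0 x).mul (hc 5 x)))).add
        (((hc 0 x).mul (hc 4 x)).sub ((hc 1 x).mul (hc 3 x)))).const_mul b)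
  replace hHd := hHd.congr_of_eventuallyEq (f₁ := Ham b (-b^2)) (Filter.Eventually.of_forall fun y => (congrFun hH y).trans rfl)
  have hJd := (((((hc 1 x).mul (hc 5 x)).sub ((hc 2 x).mul (hc 4 x))).mul ((hc 4 x).sub (hc 5 x))).add
      ((((hc 2 x).mul (hc 3 x)).sub ((hc 0 x).mul (hc 5 x))).mul ((hc 5 x).sub (hc 3 x)))).add
      ((((hc 0 x).mul (hc 4 x)).sub ((hc 1 x).mul (hc 3 x))).mul ((hc 3 x).sub (hc 4 x)))
  replace hJd := hJd.congr_of_eventuallyEq (f₁ := J4w) (Filter.Eventually.of_forall fun y => (congrFun hJ y).trans rfl)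
  simp only [pb, pd, hHd.fderiv, hJd.fderiv, ContinuousLinearMap.add_apply,
    ContinuousLinearMap.sub_apply, ContinuousLinearMap.smul_apply, smul_eq_mul, Pj,
    ContinuousLinearMap.proj_apply, Pi.single_apply]
  simp (config := { decide := true }) only [if_true, if_false]
  norm_num
  ring
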